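/- A triple system F on a finite vertex set V is D-free if and only if for every vertex x ∈ V, every connected component of the link graph F[x] is either a triangle or a star (where a star includes the degenerate cases of a single vertex or a single edge). -/

import Mathlib

/-- A triple system: a family of 3-element subsets of the vertex type. -/
def isTripleSystem {V : Type*} (F : Finset (Finset V)) : Prop :=
  ∀ t ∈ F, t.card = 3

/-- `F` contains the configuration described by `pattern` (a list of triples on `Fin m`)
if there is an injection of `Fin m` into the vertex set mapping each triple of the
pattern to a member of `F`. -/
def containsConfig {V : Type*} [DecidableEq V] {m : ℕ}
    (F : Finset (Finset V)) (pattern : List (Finset (Fin m))) : Prop :=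
  ∃ f : Fin m → V, Function.Injective f ∧ ∀ t ∈ pattern, t.image f ∈ F

/-- Configuration A: triples {1,2,4},{1,3,5},{2,3,6} on 6 vertices (0-indexed). -/
def configA : List (Finset (Fin 6)) := [{0,1,3}, {0,2,4}, {1,2,5}]

/-- Configuration B: triples {1,2,5},{1,3,4},{2,3,4} on 5 vertices (0-indexed). -/
def configB : List (Finset (Fin 5)) := [{0,1,4}, {0,2,3}, {1,2,3}]

/-- Configuration C: triples {1,2,4},{1,3,4},{2,3,4} on 4 vertices (0-indexed). -/
def configC : List (Finset (Fin 4)) := [{0,1,3}, {0,2,3}, {1,2,3}]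

/-- Configuration D: triples {1,2,3},{1,3,4},{2,3,5} on 5 vertices (0-indexed). -/
def configD : List (Finset (Fin 5)) := [{0,1,2}, {0,2,3}, {1,2,4}]


/-- The link of a vertex x in F: the graph whose edges are the pairs forming a triple
of F together with x. -/
def linkGraph {V : Type*} [DecidableEq V] (F : Finset (Finset V)) (x : V) :
    SimpleGraph V where
  Adj y z := y ≠ z ∧ y ≠ x ∧ z ≠ x ∧ ({x, y, z} : Finset V) ∈ F
  symm := by
    constructor
    rintro y z ⟨h1, h2, h3, h4⟩
    exact ⟨h1.symm, h3, h2, by rwa [Finset.pair_comm z y]⟩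
  loopless := by
    constructor
    rintro y ⟨h1, -⟩
    exact h1 rfl

/-- A connected component is a triangle: its support consists of three pairwise
adjacent vertices. -/
def isTriangleComponent {V : Type*} (G : SimpleGraph V) (c : G.ConnectedComponent) : Prop :=
  ∃ a b d : V, a ≠ b ∧ a ≠ d ∧ b ≠ d ∧ c.supp = {a, b, d} ∧
    G.Adj a b ∧ G.Adj a d ∧ G.Adj b d

/-- A connected component is a star: some vertex of the component belongs to every edge of
the component (this includes the degenerate cases of a single vertex or a single edge). -/
def isStarComponent {V : Type*} (G : SimpleGraph V) (c : G.ConnectedComponent) : Prop :=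
  ∃ v ∈ c.supp, ∀ y z : V, y ∈ c.supp → G.Adj y z → (y = v ∨ z = v)

section Graph

open SimpleGraph

variable {V : Type*} {G : SimpleGraph V}

/-- `G` contains a path on 4 distinct vertices (edges ab, ac, bd). -/
def hasP4 (G : SimpleGraph V) : Prop :=
  ∃ a b c d : V, a ≠ d ∧ b ≠ c ∧ c ≠ d ∧ G.Adj a b ∧ G.Adj a c ∧ G.Adj b d

lemma walk_closed {S : Set V} (hS : ∀ y ∈ S, ∀ z, G.Adj y z → z ∈ S) :
    ∀ {u v : V}, G.Walk u v → u ∈ S → v ∈ S := by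
  intro u v w
  induction w with
  | nil => exact id
  | cons h _ ih => exact fun hu => ih (hS _ hu _ h)

lemma reach_closed {S : Set V} (hS : ∀ y ∈ S, ∀ z, G.Adj y z → z ∈ S)
    {u v : V} (h : G.Reachable u v) (hu : u ∈ S) : v ∈ S := by
  obtain ⟨w⟩ := h; exact walk_closed hS w hu

lemma supp_adj {c : G.ConnectedComponent} {y z : V}
    (hy : y ∈ c.supp) (h : G.Adj y z) : z ∈ c.supp := by
  rw [ConnectedComponent.mem_supp_iff] at hy ⊢
  rw [← hy]
  exact ConnectedComponent.sound h.symm.reachable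

lemma reach_of_supp {c : G.ConnectedComponent} {a y : V}
    (ha : a ∈ c.supp) (hy : y ∈ c.supp) : G.Reachable a y := by
  rw [ConnectedComponent.mem_supp_iff] at ha hy
  exact ConnectedComponent.exact (ha.trans hy.symm)

lemma tri_nbrs (hP : ¬ hasP4 G) {a b d z : V} (hab : G.Adj a b) (had : G.Adj a d)
    (hbd : G.Adj b d) (haz : G.Adj a z) : z = b ∨ z = d := by
  by_contra h
  push_neg at h
  exact hP ⟨a, b, z, d, had.ne, fun e => h.1 e.symm, h.2, hab, haz, hbd⟩

lemma classify (hP : ¬ hasP4 G) (c : G.ConnectedComponent) :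
    isTriangleComponent G c ∨ isStarComponent G c := by
  obtain ⟨v₀, hv₀⟩ := c.exists_rep
  have hv₀s : v₀ ∈ c.supp := by rw [ConnectedComponent.mem_supp_iff]; exact hv₀
  by_cases htri : ∃ a b d : V, a ∈ c.supp ∧ G.Adj a b ∧ G.Adj a d ∧ G.Adj b d
  · left
    obtain ⟨a, b, d, has, hab, had, hbd⟩ := htri
    refine ⟨a, b, d, hab.ne, had.ne, hbd.ne, ?_, hab, had, hbd⟩
    have hclosed : ∀ y ∈ ({a, b, d} : Set V), ∀ z, G.Adj y z → z ∈ ({a, b, d} : Set V) := by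
      rintro y (rfl | rfl | rfl) z hz
      · rcases tri_nbrs hP hab had hbd hz with rfl | rfl
        · exact Or.inr (Or.inl rfl)
        · exact Or.inr (Or.inr rfl)
      · rcases tri_nbrs hP hab.symm hbd had hz with rfl | rfl
        · exact Or.inl rfl
        · exact Or.inr (Or.inr rfl)
      · rcases tri_nbrs hP had.symm hbd.symm hab hz with rfl | rfl
        · exact Or.inl rfl
        · exact Or.inr (Or.inl rfl)
    ext y
    constructor
    · intro hy
      exact reach_closed hclosed (reach_of_supp has hy) (Or.inl rfl)
    · rintro (rfl | rfl | rfl)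
      · exact has
      · exact supp_adj has hab
      · exact supp_adj has had
  · right
    by_cases hdeg : ∃ a b e : V, a ∈ c.supp ∧ G.Adj a b ∧ G.Adj a e ∧ b ≠ e
    · obtain ⟨a, b, e, has, hab, hae, hbe⟩ := hdeg
      have nb_only : ∀ y, G.Adj a y → ∀ z, G.Adj y z → z = a := by
        intro y hay z hyz
        by_contra hza
        obtain ⟨w, haw, hwy⟩ : ∃ w, G.Adj a w ∧ w ≠ y := by
          by_cases h : y = b
          · exact ⟨e, hae, fun hh => hbe (h ▸ hh.symm)⟩
          · exact ⟨b, hab, fun hh => h hh.symm⟩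
        by_cases hzw : z = w
        · exact htri ⟨a, y, z, has, hay, hzw ▸ haw, hyz⟩
        · exact hP ⟨a, y, w, z, fun h => hza h.symm, hwy.symm,
            fun h => hzw h.symm, hay, haw, hyz⟩
      refine ⟨a, has, ?_⟩
      intro y z hy hyz
      have hS : ∀ u ∈ ({v | v = a ∨ G.Adj a v} : Set V), ∀ z, G.Adj u z →
          z ∈ ({v | v = a ∨ G.Adj a v} : Set V) := by
        rintro u (rfl | hu) z hz
        · exact Or.inr hz
        · exact Or.inl (nb_only u hu z hz)
      rcases reach_closed hS (reach_of_supp has hy) (Or.inl rfl) with rfl | hy'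
      · exact Or.inl rfl
      · exact Or.inr (nb_only y hy' z hyz)
    · push_neg at hdeg
      by_cases hedge : ∃ w, G.Adj v₀ w
      · obtain ⟨w, hw⟩ := hedge
        have hws : w ∈ c.supp := supp_adj hv₀s hw
        refine ⟨w, hws, ?_⟩
        intro y z hy hyz
        have hS : ∀ u ∈ ({v₀, w} : Set V), ∀ z, G.Adj u z → z ∈ ({v₀, w} : Set V) := by
          rintro u (rfl | rfl) z hz
          · exact Or.inr (hdeg u z w hv₀s hz hw)
          · exact Or.inl (hdeg u z v₀ hws hz hw.symm)
        rcases reach_closed hS (reach_of_supp hv₀s hy) (Or.inl rfl) with rfl | rfl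
        · exact Or.inr (hdeg y z w hv₀s hyz hw)
        · exact Or.inl rfl
      · push_neg at hedge
        refine ⟨v₀, hv₀s, ?_⟩
        intro y z hy hyz
        have hS : ∀ u ∈ ({v₀} : Set V), ∀ z, G.Adj u z → z ∈ ({v₀} : Set V) := by
          rintro u rfl z hz
          exact absurd hz (hedge z)
        have : y = v₀ := reach_closed hS (reach_of_supp hv₀s hy) rfl
        subst this
        exact absurd hyz (hedge z)

end Graph

section Bridge

variable {V : Type*} [DecidableEq V]

lemma triple_rot (p q r : V) : ({p, q, r} : Finset V) = {r, p, q} := by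
  ext y; simp; tauto

/-- D containment is equivalent to a P4 in some link. -/
lemma containsD_iff_hasP4 (F : Finset (Finset V)) :
    containsConfig F configD ↔ ∃ x : V, hasP4 (linkGraph F x) := by
  constructor
  · rintro ⟨f, hinj, hmem⟩
    have h0 : ({0, 1, 2} : Finset (Fin 5)).image f ∈ F := hmem _ (by simp [configD])
    have h1 : ({0, 2, 3} : Finset (Fin 5)).image f ∈ F := hmem _ (by simp [configD])
    have h2 : ({1, 2, 4} : Finset (Fin 5)).image f ∈ F := hmem _ (by simp [configD])
    have e0 : ({0, 1, 2} : Finset (Fin 5)).image f = {f 2, f 0, f 1} := by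
      rw [Finset.image_insert, Finset.image_insert, Finset.image_singleton, triple_rot]
    have e1 : ({0, 2, 3} : Finset (Fin 5)).image f = {f 2, f 0, f 3} := by
      rw [Finset.image_insert, Finset.image_insert, Finset.image_singleton]
      ext y; simp; tauto
    have e2 : ({1, 2, 4} : Finset (Fin 5)).image f = {f 2, f 1, f 4} := by
      rw [Finset.image_insert, Finset.image_insert, Finset.image_singleton]
      ext y; simp; tauto
    rw [e0] at h0; rw [e1] at h1; rw [e2] at h2
    refine ⟨f 2, f 0, f 1, f 3, f 4, hinj.ne (by decide), hinj.ne (by decide),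
      hinj.ne (by decide), ?_, ?_, ?_⟩
    · exact ⟨hinj.ne (by decide), hinj.ne (by decide), hinj.ne (by decide), h0⟩
    · exact ⟨hinj.ne (by decide), hinj.ne (by decide), hinj.ne (by decide), h1⟩
    · exact ⟨hinj.ne (by decide), hinj.ne (by decide), hinj.ne (by decide), h2⟩
  · rintro ⟨x, a, b, cc, d, had, hbc, hcd, hab, hac, hbd⟩
    obtain ⟨hab1, hax, hbx, hFab⟩ := hab
    obtain ⟨hac1, -, hcx, hFac⟩ := hac
    obtain ⟨hbd1, -, hdx, hFbd⟩ := hbd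
    refine ⟨![a, b, x, cc, d], ?_, ?_⟩
    · intro i j hij
      fin_cases i <;> fin_cases j <;>
        simp_all [Matrix.cons_val_zero, Matrix.cons_val_one, Matrix.head_cons] <;>
        first
          | rfl
          | (exact absurd hij (by tauto))
          | (exact absurd hij.symm (by tauto))
    · intro t ht
      simp only [configD, List.mem_cons, List.not_mem_nil, or_false] at ht
      rcases ht with rfl | rfl | rfl
      · have : ({0, 1, 2} : Finset (Fin 5)).image ![a, b, x, cc, d] = {x, a, b} := by
          rw [Finset.image_insert, Finset.image_insert, Finset.image_singleton]
          simp [triple_rot a b x]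
        rw [this]; exact hFab
      · have : ({0, 2, 3} : Finset (Fin 5)).image ![a, b, x, cc, d] = {x, a, cc} := by
          rw [Finset.image_insert, Finset.image_insert, Finset.image_singleton]
          simp
          ext y; simp; tauto
        rw [this]; exact hFac
      · have : ({1, 2, 4} : Finset (Fin 5)).image ![a, b, x, cc, d] = {x, b, d} := by
          rw [Finset.image_insert, Finset.image_insert, Finset.image_singleton]
          simp
          ext y; simp; tauto
        rw [this]; exact hFbd

end Bridge

open SimpleGraph in
/-- A triple system is D-free iff every connected component of every link is a triangle
or a star. -/
theorem Dfree_iff_links (V : Type*) [DecidableEq V] (F : Finset (Finset V))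
    (hF : isTripleSystem F) :
    ¬ containsConfig F configD ↔
      ∀ x : V, ∀ c : (linkGraph F x).ConnectedComponent,
        isTriangleComponent (linkGraph F x) c ∨ isStarComponent (linkGraph F x) c := by
  rw [containsD_iff_hasP4]
  push_neg
  constructor
  · intro h x c
    exact classify (h x) c
  · intro h x
    rintro ⟨a, b, cc, d, had, hbc, hcd, hab, hac, hbd⟩
    set G := linkGraph F x
    have has : a ∈ (G.connectedComponentMk a).supp := by
      rw [ConnectedComponent.mem_supp_iff]
    have hbs : b ∈ (G.connectedComponentMk a).supp := supp_adj has hab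
    have hcs : cc ∈ (G.connectedComponentMk a).supp := supp_adj has hac
    have hds : d ∈ (G.connectedComponentMk a).supp := supp_adj hbs hbd
    rcases h x (G.connectedComponentMk a) with
      ⟨p, q, r, hpq, hpr, hqr, hsupp, -, -, -⟩ | ⟨v, -, hstar⟩
    · rw [hsupp] at has hbs hcs hds
      simp only [Set.mem_insert_iff, Set.mem_singleton_iff] at has hbs hcs hds
      have h1 := hab.ne
      have h2 := hac.ne
      have h3 := hbd.ne
      rcases has with rfl|rfl|rfl <;> rcases hbs with rfl|rfl|rfl <;>
        rcases hcs with rfl|rfl|rfl <;> rcases hds with rfl|rfl|rfl <;> simp_all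
    · rcases hstar a b has hab with rfl | rfl
      · rcases hstar b d hbs hbd with rfl | rfl
        · exact hab.ne rfl
        · exact had rfl
      · rcases hstar a cc has hac with rfl | rfl
        · exact hab.ne rfl
        · exact hbc rfl
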